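/- arXiv:2105.07220 — 5 statements merged into one kernel-verified Lean document; each statement's English description precedes it below -/
import Mathlib

section
/- (Correctness of the paper's eqLen encoding.) For all binary words α and β: |α| = |β| if and only if there exists k ≥ 0 such that, writing z for the binary word consisting of the digit 1 followed by k zeros (i.e., z ∈ L(1·0^*)), the following inequalities hold: val(z) ≤ val(1·α), val(1·α) + 1 ≤ val(z·0), val(z) ≤ val(1·β), and val(1·β) + 1 ≤ val(z·0). -/
/-- Value of a binary word (big-endian, `true` = 1, `false` = 0):
`val w = Σ_{j=1}^{|w|} w[j] · 2^{|w|-j}`. -/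
def binVal : List Bool → ℕ :=
  fun w => w.foldl (fun n b => 2 * n + (if b then 1 else 0)) 0

private lemma foldl_eq (w : List Bool) : ∀ n : ℕ,
    w.foldl (fun n b => 2 * n + (if b then 1 else 0)) n = n * 2 ^ w.length + binVal w := by
  induction w with
  | nil => intro n; simp [binVal]
  | cons b t ih =>
      intro n
      simp only [List.foldl_cons, binVal, List.length_cons]
      rw [ih, ih]
      cases b <;> simp [pow_succ, binVal] <;> ring

private lemma binVal_cons (b : Bool) (w : List Bool) :
    binVal (b :: w) = (if b then 1 else 0) * 2 ^ w.length + binVal w := by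
  simp only [binVal, List.foldl_cons]
  rw [foldl_eq]
  cases b <;> simp [binVal]

private lemma binVal_lt (w : List Bool) : binVal w < 2 ^ w.length := by
  induction w with
  | nil => simp [binVal]
  | cons b t ih =>
      rw [binVal_cons]
      cases b <;> simp [List.length_cons, pow_succ] <;> omega

private lemma binVal_rep (k : ℕ) : binVal (true :: List.replicate k false) = 2 ^ k := by
  rw [binVal_cons]
  have : ∀ m, binVal (List.replicate m false) = 0 := by
    intro m; induction m with
    | zero => simp [binVal]
    | succ n ih => rw [List.replicate_succ, binVal_cons]; simpa using ih
  simp [this]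

private lemma binVal_append_false (w : List Bool) :
    binVal (w ++ [false]) = 2 * binVal w := by
  simp only [binVal, List.foldl_append, List.foldl_cons, List.foldl_nil]
  simp

theorem stmt_3 (α β : List Bool) :
    α.length = β.length ↔
      ∃ k : ℕ,
        binVal (true :: List.replicate k false) ≤ binVal (true :: α) ∧
        binVal (true :: α) + 1 ≤ binVal ((true :: List.replicate k false) ++ [false]) ∧
        binVal (true :: List.replicate k false) ≤ binVal (true :: β) ∧
        binVal (true :: β) + 1 ≤ binVal ((true :: List.replicate k false) ++ [false]) := by
  have key : ∀ (γ : List Bool) (k : ℕ),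
      (binVal (true :: List.replicate k false) ≤ binVal (true :: γ) ∧
       binVal (true :: γ) + 1 ≤ binVal ((true :: List.replicate k false) ++ [false]))
      ↔ k = γ.length := by
    intro γ k
    rw [binVal_rep, binVal_append_false, binVal_rep, binVal_cons]
    have hlt := binVal_lt γ
    constructor
    · rintro ⟨h1, h2⟩
      by_contra hne
      rcases Nat.lt_or_ge k γ.length with h | h
      · have : 2 * 2 ^ k ≤ 2 ^ γ.length := by
          calc 2 * 2 ^ k = 2 ^ (k + 1) := by ring
          _ ≤ 2 ^ γ.length := Nat.pow_le_pow_right (by norm_num) h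
        simp at h2; omega
      · have h' : γ.length < k := lt_of_le_of_ne h (fun e => hne e.symm)
        have : 2 ^ (γ.length + 1) ≤ 2 ^ k := Nat.pow_le_pow_right (by norm_num) h'
        simp at h1
        have : 2 ^ γ.length + binVal γ < 2 ^ (γ.length + 1) := by
          rw [pow_succ]; omega
        omega
    · rintro rfl
      simp
      omega
  constructor
  · intro h
    exact ⟨α.length, (key α α.length).2 rfl |>.1, ((key α α.length).2 rfl).2,
      ((key β α.length).2 h).1, ((key β α.length).2 h).2⟩
  · rintro ⟨k, h1, h2, h3, h4⟩
    have e1 := (key α k).1 ⟨h1, h2⟩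
    have e2 := (key β k).1 ⟨h3, h4⟩
    omega
end

section
/- (Semilinearity of length sets, with period bound.) Let M be an NFA over an alphabet Σ whose state type is finite of cardinality m. Then there exists a finite set F of pairs (p, c) of natural numbers, with c ≤ m for every (p, c) ∈ F, such that the length set {|w| : w ∈ L(M)} equals the union over (p, c) ∈ F of the arithmetic progressions {p + r·c : r ∈ ℕ}. -/
section Aux

variable {A σ : Type*}

private lemma nfa_run_of_mem (M : NFA A σ) :
    ∀ (w : List A) (S : Set σ) (t : σ), t ∈ M.evalFrom S w →
      ∃ f : ℕ → σ, f 0 ∈ S ∧ f w.length = t ∧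
        ∀ i (h : i < w.length), f (i + 1) ∈ M.step (f i) (w.get ⟨i, h⟩) := by
  intro w
  induction w with
  | nil =>
    intro S t ht
    exact ⟨fun _ => t, ht, rfl, fun i h => absurd h (Nat.not_lt_zero i)⟩
  | cons a w ih =>
    intro S t ht
    have ht' : t ∈ M.evalFrom (M.stepSet S a) w := ht
    obtain ⟨f, hf0, hflen, hfstep⟩ := ih (M.stepSet S a) t ht'
    have : ∃ s ∈ S, f 0 ∈ M.step s a := by
      simpa [NFA.stepSet] using hf0
    obtain ⟨s, hs, hsa⟩ := this
    refine ⟨fun i => Nat.rec s (fun i _ => f i) i, hs, hflen, ?_⟩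
    intro i h
    cases i with
    | zero => simpa using hsa
    | succ i => simpa using hfstep i (by simpa using h)

private lemma nfa_mem_of_run (M : NFA A σ) :
    ∀ (w : List A) (S : Set σ) (f : ℕ → σ), f 0 ∈ S →
      (∀ i (h : i < w.length), f (i + 1) ∈ M.step (f i) (w.get ⟨i, h⟩)) →
      f w.length ∈ M.evalFrom S w := by
  intro w
  induction w with
  | nil => intro S f h0 _; exact h0
  | cons a w ih =>
    intro S f h0 hstep
    have h1 : f 1 ∈ M.stepSet S a := by
      refine Set.mem_iUnion₂.2 ⟨f 0, h0, ?_⟩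
      simpa using hstep 0 (by simp)
    have := ih (M.stepSet S a) (fun i => f (i + 1)) h1
      (fun i h => by simpa using hstep (i + 1) (by simpa using h))
    simpa using this

private lemma nfa_evalFrom_mono (M : NFA A σ) :
    ∀ (w : List A) {S T : Set σ}, S ⊆ T → M.evalFrom S w ⊆ M.evalFrom T w := by
  intro w
  induction w with
  | nil => intro S T h; exact h
  | cons a w ih =>
    intro S T h
    have hstep : M.stepSet S a ⊆ M.stepSet T a := by
      intro x hx
      obtain ⟨s, hs, hxs⟩ := Set.mem_iUnion₂.1 hx
      exact Set.mem_iUnion₂.2 ⟨s, h hs, hxs⟩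
    exact ih hstep

private lemma nfa_evalFrom_append (M : NFA A σ) (S : Set σ) (x y : List A) :
    M.evalFrom S (x ++ y) = M.evalFrom (M.evalFrom S x) y := by
  simp [NFA.evalFrom, List.foldl_append]

private lemma nfa_cycle_pump (M : NFA A σ) {q : σ} {b : List A}
    (hq : q ∈ M.evalFrom {q} b) :
    ∀ r : ℕ, q ∈ M.evalFrom {q} (List.replicate r b).flatten := by
  intro r
  induction r with
  | zero => simp [NFA.evalFrom]
  | succ r ih =>
    have : (List.replicate (r + 1) b).flatten = b ++ (List.replicate r b).flatten := by
      simp [List.replicate_succ]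
    rw [this, nfa_evalFrom_append]
    exact nfa_evalFrom_mono M _ (Set.singleton_subset_iff.2 hq) ih

private lemma nfa_length_pump [Fintype σ] (M : NFA A σ) (m : ℕ)
    (hm : Fintype.card σ = m) {w : List A} (hw : w ∈ M.accepts)
    (hlen : m ≤ w.length) :
    ∃ c, 1 ≤ c ∧ c ≤ m ∧ ∀ r : ℕ, ∃ w' ∈ M.accepts,
      w'.length = w.length - c + r * c := by
  obtain ⟨t, ht, htw⟩ := hw
  obtain ⟨f, hf0, hflen, hfstep⟩ := nfa_run_of_mem M w M.start t htw
  -- pigeonhole on states f 0, ..., f m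
  have hcard : Fintype.card σ < Fintype.card (Fin (m + 1)) := by
    simp [hm]
  obtain ⟨a, b, hab, hfab⟩ :=
    Fintype.exists_ne_map_eq_of_card_lt (fun k : Fin (m + 1) => f k) hcard
  -- wlog i < j
  obtain ⟨i, j, hij, hjm, hfij⟩ : ∃ i j : ℕ, i < j ∧ j ≤ m ∧ f i = f j := by
    rcases lt_or_gt_of_ne hab with h | h
    · exact ⟨a, b, h, Nat.lt_succ_iff.1 b.isLt, hfab⟩
    · exact ⟨b, a, h, Nat.lt_succ_iff.1 a.isLt, hfab.symm⟩
  have hjw : j ≤ w.length := le_trans hjm hlen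
  have hiw : i ≤ w.length := le_trans (le_of_lt hij) hjw
  set c := j - i with hc
  refine ⟨c, by omega, by omega, ?_⟩
  set x := w.take i with hx
  set b' := (w.drop i).take c with hb'
  set z := w.drop j with hz
  have hxlen : x.length = i := by simp [hx]; omega
  have hb'len : b'.length = c := by simp [hb']; omega
  have hzlen : z.length = w.length - j := by simp [hz]
  -- f i ∈ evalFrom start x
  have h1 : f i ∈ M.evalFrom M.start x := by
    have := nfa_mem_of_run M x M.start f hf0 ?_
    · rwa [hxlen] at this
    · intro k hk
      have hk' : k < w.length := lt_of_lt_of_le (hxlen ▸ hk) hiw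
      have : x.get ⟨k, hk⟩ = w.get ⟨k, hk'⟩ := by
        simp [hx, List.get_eq_getElem, List.getElem_take]
      rw [this]; exact hfstep k hk'
  -- f j ∈ evalFrom {f i} b'
  have h2 : f j ∈ M.evalFrom {(f i)} b' := by
    have := nfa_mem_of_run M b' {(f i)} (fun k => f (i + k)) rfl ?_
    · rw [hb'len] at this
      have hijc : i + c = j := by omega
      simpa [hijc] using this
    · intro k hk
      have hk2 : k < c := hb'len ▸ hk
      have hk' : i + k < w.length := by omega
      have : b'.get ⟨k, hk⟩ = w.get ⟨i + k, hk'⟩ := by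
        simp [hb', List.get_eq_getElem, List.getElem_take, List.getElem_drop]
      rw [this]
      have := hfstep (i + k) hk'
      simpa [Nat.add_assoc] using this
  -- t ∈ evalFrom {f j} z
  have h3 : t ∈ M.evalFrom {(f j)} z := by
    have := nfa_mem_of_run M z {(f j)} (fun k => f (j + k)) rfl ?_
    · rw [hzlen] at this
      have : f (j + (w.length - j)) ∈ M.evalFrom {(f j)} z := this
      rwa [show j + (w.length - j) = w.length by omega, hflen] at this
    · intro k hk
      have hk2 : k < w.length - j := hzlen ▸ hk
      have hk' : j + k < w.length := by omega
      have : z.get ⟨k, hk⟩ = w.get ⟨j + k, hk'⟩ := by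
        simp [hz, List.get_eq_getElem, List.getElem_drop]
      rw [this]
      have := hfstep (j + k) hk'
      simpa [Nat.add_assoc] using this
  intro r
  set J := (List.replicate r b').flatten with hJ
  refine ⟨x ++ (J ++ z), ?_, ?_⟩
  · -- accepted
    have hq : f i ∈ M.evalFrom {(f i)} b' := by rw [hfij]; exact hfij ▸ h2
    have hcyc : f i ∈ M.evalFrom {(f i)} J := nfa_cycle_pump M hq r
    refine ⟨t, ht, ?_⟩
    show t ∈ M.evalFrom M.start (x ++ (J ++ z))
    rw [nfa_evalFrom_append, nfa_evalFrom_append]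
    have hsub1 : M.evalFrom {(f i)} J ⊆ M.evalFrom (M.evalFrom M.start x) J :=
      nfa_evalFrom_mono M J (Set.singleton_subset_iff.2 h1)
    have hfiJ : f i ∈ M.evalFrom (M.evalFrom M.start x) J := hsub1 hcyc
    have hsub2 : M.evalFrom {(f j)} z ⊆
        M.evalFrom (M.evalFrom (M.evalFrom M.start x) J) z := by
      apply nfa_evalFrom_mono
      rw [← hfij]
      exact Set.singleton_subset_iff.2 hfiJ
    exact hsub2 h3
  · -- length
    have hJlen : J.length = r * c := by
      simp [hJ, hb'len, Nat.mul_comm]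
    simp only [List.length_append, hxlen, hJlen, hzlen]
    omega

private lemma semilinear_of_pump (m : ℕ) (S : Set ℕ)
    (h : ∀ n ∈ S, m ≤ n → ∃ c, 1 ≤ c ∧ c ≤ m ∧ ∀ r : ℕ, n - c + r * c ∈ S) :
    ∃ F : Finset (ℕ × ℕ), (∀ pc ∈ F, pc.2 ≤ m) ∧
      S = ⋃ pc ∈ F, {n : ℕ | ∃ r : ℕ, n = pc.1 + r * pc.2} := by
  classical
  set Q : ℕ → ℕ → ℕ → Prop := fun c ρ p => p % c = ρ ∧ ∀ r, p + r * c ∈ S with hQ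
  set F0 : Finset (ℕ × ℕ) := ((Finset.range m).filter (· ∈ S)).image (fun n => (n, 0)) with hF0
  set F1 : Finset (ℕ × ℕ) :=
    ((Finset.Icc 1 m ×ˢ Finset.range m).filter (fun cρ => ∃ p, Q cρ.1 cρ.2 p)).image
      (fun cρ => (sInf {p | Q cρ.1 cρ.2 p}, cρ.1)) with hF1
  refine ⟨F0 ∪ F1, ?_, ?_⟩
  · intro pc hpc
    rcases Finset.mem_union.1 hpc with hpc | hpc
    · obtain ⟨n, _, hn⟩ := Finset.mem_image.1 hpc
      simp [← hn]
    · obtain ⟨cρ, hcρ, hn⟩ := Finset.mem_image.1 hpc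
      have := Finset.mem_filter.1 hcρ
      have hmem := (Finset.mem_product.1 this.1).1
      have : cρ.1 ≤ m := (Finset.mem_Icc.1 hmem).2
      simp [← hn, this]
  · ext n
    simp only [Set.mem_setOf_eq, Set.mem_iUnion]
    constructor
    · intro hn
      by_cases hnm : n < m
      · refine ⟨(n, 0), ?_, 0, by simp⟩
        exact Finset.mem_union_left _ (Finset.mem_image.2
          ⟨n, Finset.mem_filter.2 ⟨Finset.mem_range.2 hnm, hn⟩, rfl⟩)
      · push_neg at hnm
        obtain ⟨c, hc1, hcm, hpump⟩ := h n hn hnm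
        set p0 := n - c with hp0
        set ρ := p0 % c with hρ
        have hQ0 : Q c ρ p0 := ⟨rfl, hpump⟩
        have hne : ∃ p, Q c ρ p := ⟨p0, hQ0⟩
        have hρm : ρ < m := lt_of_lt_of_le (Nat.mod_lt _ (by omega)) hcm
        have hmemF1 : (sInf {p | Q c ρ p}, c) ∈ F1 := by
          refine Finset.mem_image.2 ⟨(c, ρ), Finset.mem_filter.2 ⟨?_, hne⟩, rfl⟩
          exact Finset.mem_product.2 ⟨Finset.mem_Icc.2 ⟨hc1, hcm⟩, Finset.mem_range.2 hρm⟩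
        set p := sInf {p | Q c ρ p} with hp
        have hpQ : Q c ρ p := Nat.sInf_mem (⟨p0, hQ0⟩ : {p | Q c ρ p}.Nonempty)
        have hple : p ≤ p0 := Nat.sInf_le hQ0
        have hmodeq : p ≡ p0 [MOD c] := by
          unfold Nat.ModEq
          rw [hpQ.1, hρ]
        obtain ⟨k, hk⟩ := (Nat.modEq_iff_dvd' hple).1 hmodeq
        refine ⟨(p, c), Finset.mem_union_right _ hmemF1, k + 1, ?_⟩
        simp only
        have : n = p0 + c := by omega
        rw [this]
        have : p0 = p + c * k := by omega
        rw [this]; ring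
    · rintro ⟨pc, hpc, r, hr⟩
      rcases Finset.mem_union.1 hpc with hpc | hpc
      · obtain ⟨q, hq, hqe⟩ := Finset.mem_image.1 hpc
        have hq' := Finset.mem_filter.1 hq
        have : pc = (q, 0) := hqe.symm
        rw [this] at hr
        simp at hr
        rw [hr]
        exact hq'.2
      · obtain ⟨cρ, hcρ, hqe⟩ := Finset.mem_image.1 hpc
        have hne : ∃ p, Q cρ.1 cρ.2 p := (Finset.mem_filter.1 hcρ).2
        have hQmin : Q cρ.1 cρ.2 (sInf {p | Q cρ.1 cρ.2 p}) :=
          Nat.sInf_mem (Set.nonempty_def.2 hne)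
        have : pc = (sInf {p | Q cρ.1 cρ.2 p}, cρ.1) := hqe.symm
        rw [this] at hr
        rw [hr]
        exact hQmin.2 r

end Aux

theorem stmt_8 {A σ : Type*} [Fintype σ] (M : NFA A σ) (m : ℕ)
    (hm : Fintype.card σ = m) :
    ∃ F : Finset (ℕ × ℕ),
      (∀ pc ∈ F, pc.2 ≤ m) ∧
      {n : ℕ | ∃ w ∈ M.accepts, w.length = n} =
        ⋃ pc ∈ F, {n : ℕ | ∃ r : ℕ, n = pc.1 + r * pc.2} := by
  apply semilinear_of_pump
  intro n hn hmn
  obtain ⟨w, hw, hwlen⟩ := hn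
  obtain ⟨c, hc1, hcm, hpump⟩ := nfa_length_pump M m hm hw (hwlen ▸ hmn)
  refine ⟨c, hc1, hcm, fun r => ?_⟩
  obtain ⟨w', hw', hw'len⟩ := hpump r
  exact ⟨w', hw', by omega⟩
end

section
/- (Eventual periodicity of length sets of regular languages.) Let M be an NFA over an alphabet Σ whose state type is finite. Then there exist natural numbers t and p with p ≥ 1 such that for all n ≥ t: M accepts some word of length n if and only if M accepts some word of length n + p. -/
open Set

private def nfaStep {A σ : Type*} (M : NFA A σ) (S : Set σ) : Set σ := ⋃ a, M.stepSet S a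

private lemma mem_nfaStep_iterate {A σ : Type*} (M : NFA A σ) (S : Set σ) (n : ℕ) (s : σ) :
    s ∈ (nfaStep M)^[n] S ↔ ∃ w : List A, w.length = n ∧ s ∈ M.evalFrom S w := by
  induction n generalizing s with
  | zero =>
    constructor
    · intro h; exact ⟨[], rfl, h⟩
    · rintro ⟨w, hw, h⟩
      rw [List.length_eq_zero_iff] at hw; subst hw; exact h
  | succ n ih =>
    rw [Function.iterate_succ_apply']
    constructor
    · intro hs
      obtain ⟨a, ha⟩ : ∃ a, s ∈ M.stepSet ((nfaStep M)^[n] S) a := by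
        simpa [nfaStep, mem_iUnion] using hs
      rw [NFA.mem_stepSet] at ha
      obtain ⟨q, hq, hstep⟩ := ha
      obtain ⟨w, hwlen, hw⟩ := (ih q).1 hq
      refine ⟨w ++ [a], by simp [hwlen], ?_⟩
      rw [NFA.evalFrom_append, NFA.evalFrom_singleton, NFA.mem_stepSet]
      exact ⟨q, hw, hstep⟩
    · rintro ⟨w, hwlen, hw⟩
      rcases w.eq_nil_or_concat with rfl | ⟨y, a, rfl⟩
      all_goals simp -failIfUnchanged only [List.concat_eq_append] at *
      · simp at hwlen
      · rw [NFA.evalFrom_append, NFA.evalFrom_singleton, NFA.mem_stepSet] at hw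
        obtain ⟨q, hq, hstep⟩ := hw
        have hq' : q ∈ (nfaStep M)^[n] S :=
          (ih q).2 ⟨y, by simpa using hwlen, hq⟩
        simp only [nfaStep, mem_iUnion]
        exact ⟨a, M.mem_stepSet.2 ⟨q, hq', hstep⟩⟩

theorem stmt_9 {A σ : Type*} [Fintype σ] (M : NFA A σ) :
    ∃ t p : ℕ, 1 ≤ p ∧
      ∀ n : ℕ, t ≤ n →
        ((∃ w ∈ M.accepts, w.length = n) ↔ (∃ w ∈ M.accepts, w.length = n + p)) := by
  have key : ∀ n : ℕ, (∃ w ∈ M.accepts, w.length = n) ↔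
      ∃ s ∈ M.accept, s ∈ (nfaStep M)^[n] M.start := by
    intro n
    constructor
    · rintro ⟨w, hw, rfl⟩
      obtain ⟨s, hs, hev⟩ := (M.mem_accepts).1 hw
      exact ⟨s, hs, (mem_nfaStep_iterate M _ _ s).2 ⟨w, rfl, hev⟩⟩
    · rintro ⟨s, hs, hit⟩
      obtain ⟨w, hwlen, hev⟩ := (mem_nfaStep_iterate M _ _ s).1 hit
      exact ⟨w, (M.mem_accepts).2 ⟨s, hs, hev⟩, hwlen⟩
  obtain ⟨i, j, hij, heq⟩ : ∃ i j : ℕ, i < j ∧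
      (nfaStep M)^[i] M.start = (nfaStep M)^[j] M.start := by
    obtain ⟨m, k, hne, heq⟩ := Finite.exists_ne_map_eq_of_infinite
      (fun n : ℕ => (nfaStep M)^[n] M.start)
    rcases hne.lt_or_gt with h | h
    · exact ⟨m, k, h, heq⟩
    · exact ⟨k, m, h, heq.symm⟩
  refine ⟨i, j - i, by omega, fun n hn => ?_⟩
  have hper : (nfaStep M)^[n] M.start = (nfaStep M)^[n + (j - i)] M.start := by
    calc (nfaStep M)^[n] M.start
        = (nfaStep M)^[n - i] ((nfaStep M)^[i] M.start) := by
          rw [← Function.iterate_add_apply]; congr 1; omega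
      _ = (nfaStep M)^[n - i] ((nfaStep M)^[j] M.start) := by rw [heq]
      _ = (nfaStep M)^[n + (j - i)] M.start := by
          rw [← Function.iterate_add_apply]; congr 1; omega
  rw [key n, key (n + (j - i)), hper]
end

section
/- (Small-model property for conjunctions of positive and negated regular membership constraints on one string variable.) Let M₁, …, M_k be NFAs over a common alphabet Σ with state types of cardinalities m₁, …, m_k, and let N₁, …, N_l be NFAs over Σ with state types of cardinalities n₁, …, n_l. If there exists a word w ∈ Σ^* such that w ∈ L(M_i) for all i and w ∉ L(N_j) for all j, then there exists such a word of length strictly less than (∏_{i=1}^{k} m_i) · (∏_{j=1}^{l} 2^{n_j}). -/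
open Set

namespace NFAshort

variable {A : Type*} {σ : Type*} (P : NFA A σ)

/-- states reachable by a word of length ≤ n -/
def Sn (n : ℕ) : Set σ := {t | ∃ w : List A, w.length ≤ n ∧ t ∈ P.eval w}

lemma Sn_mono {m n : ℕ} (h : m ≤ n) : Sn P m ⊆ Sn P n := by
  rintro t ⟨w, hw, ht⟩; exact ⟨w, hw.trans h, ht⟩

lemma Sn_stab {n : ℕ} (h : Sn P n = Sn P (n + 1)) : ∀ m, Sn P m ⊆ Sn P n := by
  intro m
  induction m with
  | zero => exact Sn_mono P (Nat.zero_le n)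
  | succ m ih =>
    rintro t ⟨w, hw, ht⟩
    rcases List.eq_nil_or_concat w with rfl | ⟨x, a, rfl⟩
    all_goals (try simp only [List.concat_eq_append] at *)
    · exact Sn_mono P (Nat.zero_le n) ⟨[], le_rfl, ht⟩
    · rw [NFA.eval_append_singleton, NFA.mem_stepSet] at ht
      obtain ⟨s, hs, hst⟩ := ht
      have hsn : s ∈ Sn P n := ih ⟨x, by simpa using Nat.le_of_succ_le_succ (by simpa using hw), hs⟩
      obtain ⟨v, hv, hsv⟩ := hsn
      have : t ∈ Sn P (n + 1) := by
        refine ⟨v ++ [a], by simpa using Nat.succ_le_succ hv, ?_⟩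
        rw [NFA.eval_append_singleton, NFA.mem_stepSet]
        exact ⟨s, hsv, hst⟩
      rwa [← h] at this

lemma evalFrom_empty (w : List A) : P.evalFrom (∅ : Set σ) w = ∅ := by
  induction w with
  | nil => rfl
  | cons a w ih =>
    show P.evalFrom (P.stepSet ∅ a) w = ∅
    rwa [NFA.stepSet_empty]

lemma shortest [Fintype σ] {w : List A} (hw : w ∈ P.accepts) :
    ∃ w' : List A, w' ∈ P.accepts ∧ w'.length < Fintype.card σ := by
  classical
  obtain ⟨t, htacc, hteval⟩ := hw
  -- start is nonempty
  have hstart : (P.start : Set σ).Nonempty := by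
    by_contra hne
    rw [Set.not_nonempty_iff_eq_empty] at hne
    have : P.eval w = ∅ := by
      unfold NFA.eval; rw [hne]; exact evalFrom_empty P w
    rw [this] at hteval; exact hteval
  set c := Fintype.card σ with hc
  -- there is a stabilization point n < c
  have hstab : ∃ n < c, Sn P n = Sn P (n + 1) := by
    by_contra hcon
    push_neg at hcon
    have key : ∀ n, n ≤ c → n + 1 ≤ (Sn P n).ncard := by
      intro n
      induction n with
      | zero =>
        intro _
        have : (Sn P 0).Nonempty := hstart.imp fun s hs => ⟨[], le_rfl, hs⟩
        exact (Set.ncard_pos (Set.toFinite _)).mpr this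
      | succ n ih =>
        intro hn
        have hss : Sn P n ⊂ Sn P (n + 1) :=
          ⟨Sn_mono P (Nat.le_succ n), fun hsub =>
            hcon n (Nat.lt_of_succ_le hn) (le_antisymm (Sn_mono P (Nat.le_succ n)) hsub)⟩
        have := Set.ncard_lt_ncard hss (Set.toFinite _)
        have := ih (Nat.le_of_succ_le hn)
        omega
    have h1 : c + 1 ≤ (Sn P c).ncard := key c le_rfl
    have h2 : (Sn P c).ncard ≤ c := by
      calc (Sn P c).ncard ≤ (Set.univ : Set σ).ncard :=
            Set.ncard_le_ncard (Set.subset_univ _) (Set.toFinite _)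
        _ = c := by rw [Set.ncard_univ, Nat.card_eq_fintype_card]
    omega
  obtain ⟨n, hn, hSn⟩ := hstab
  have ht : t ∈ Sn P n := Sn_stab P hSn w.length ⟨w, le_rfl, hteval⟩
  obtain ⟨v, hv, htv⟩ := ht
  exact ⟨v, ⟨t, htacc, htv⟩, lt_of_le_of_lt hv hn⟩

end NFAshort

section Product

variable {A : Type*} {k l : ℕ} (σ : Fin k → Type*) (τ : Fin l → Type*)
  (M : ∀ i, NFA A (σ i)) (N : ∀ j, NFA A (τ j))

/-- product NFA: nondeterministic product of the `M i`, deterministic (subset) product of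
the `N j`. -/
def prodNFA : NFA A ((∀ i, σ i) × ∀ j, Set (τ j)) where
  step := fun pq a =>
    {p'q' | (∀ i, p'q'.1 i ∈ (M i).step (pq.1 i) a) ∧ ∀ j, p'q'.2 j = (N j).stepSet (pq.2 j) a}
  start := {pq | (∀ i, pq.1 i ∈ (M i).start) ∧ ∀ j, pq.2 j = (N j).start}
  accept := {pq | (∀ i, pq.1 i ∈ (M i).accept) ∧ ∀ j, ∀ s ∈ pq.2 j, s ∉ (N j).accept}

lemma prodNFA_eval (w : List A) :
    (prodNFA σ τ M N).eval w =
      {pq | (∀ i, pq.1 i ∈ (M i).eval w) ∧ ∀ j, pq.2 j = (N j).eval w} := by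
  induction w using List.reverseRecOn with
  | nil => rfl
  | append_singleton x a ih =>
    ext ⟨p, q⟩
    rw [NFA.eval_append_singleton, NFA.mem_stepSet]
    constructor
    · rintro ⟨⟨p₀, q₀⟩, hpq₀, hstep⟩
      rw [ih] at hpq₀
      obtain ⟨hp₀, hq₀⟩ := hpq₀
      obtain ⟨hstepp, hstepq⟩ := hstep
      constructor
      · intro i
        rw [NFA.eval_append_singleton, NFA.mem_stepSet]
        exact ⟨p₀ i, hp₀ i, hstepp i⟩
      · intro j
        rw [NFA.eval_append_singleton, hstepq j, hq₀ j]
    · rintro ⟨hp, hq⟩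
      have hp' : ∀ i, ∃ s ∈ (M i).eval x, p i ∈ (M i).step s a := by
        intro i
        have := hp i
        rw [NFA.eval_append_singleton, NFA.mem_stepSet] at this
        exact this
      choose p₀ hp₀ hp₀step using hp'
      refine ⟨⟨p₀, fun j => (N j).eval x⟩, ?_, ?_, ?_⟩
      · rw [ih]; exact ⟨hp₀, fun j => rfl⟩
      · exact hp₀step
      · intro j
        have := hq j
        rw [NFA.eval_append_singleton] at this
        exact this

lemma prodNFA_accepts (w : List A) :
    w ∈ (prodNFA σ τ M N).accepts ↔
      (∀ i, w ∈ (M i).accepts) ∧ ∀ j, w ∉ (N j).accepts := by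
  constructor
  · rintro ⟨⟨p, q⟩, ⟨haccp, haccq⟩, heval⟩
    rw [prodNFA_eval] at heval
    obtain ⟨hp, hq⟩ := heval
    constructor
    · exact fun i => ⟨p i, haccp i, hp i⟩
    · rintro j ⟨s, hsacc, hseval⟩
      exact haccq j s (by rw [hq j]; exact hseval) hsacc
  · rintro ⟨hpos, hneg⟩
    have hp' : ∀ i, ∃ s ∈ (M i).accept, s ∈ (M i).eval w := hpos
    choose p hpacc hpeval using hp'
    refine ⟨⟨p, fun j => (N j).eval w⟩, ⟨hpacc, ?_⟩, ?_⟩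
    · intro j s hs hsacc
      exact hneg j ⟨s, hsacc, hs⟩
    · rw [prodNFA_eval]
      exact ⟨hpeval, fun j => rfl⟩

end Product

theorem stmt_10 {A : Type*} {k l : ℕ}
    (σ : Fin k → Type*) (τ : Fin l → Type*)
    [∀ i, Fintype (σ i)] [∀ j, Fintype (τ j)]
    (M : ∀ i, NFA A (σ i)) (N : ∀ j, NFA A (τ j))
    (h : ∃ w : List A, (∀ i, w ∈ (M i).accepts) ∧ ∀ j, w ∉ (N j).accepts) :
    ∃ w : List A,
      ((∀ i, w ∈ (M i).accepts) ∧ ∀ j, w ∉ (N j).accepts) ∧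
      w.length < (∏ i, Fintype.card (σ i)) * ∏ j, 2 ^ Fintype.card (τ j) := by
  classical
  obtain ⟨w, hw⟩ := h
  have hwacc : w ∈ (prodNFA σ τ M N).accepts := (prodNFA_accepts σ τ M N w).mpr hw
  obtain ⟨w', hw'acc, hw'len⟩ := NFAshort.shortest (prodNFA σ τ M N) hwacc
  refine ⟨w', (prodNFA_accepts σ τ M N w').mp hw'acc, ?_⟩
  have hcard : Fintype.card ((∀ i, σ i) × ∀ j, Set (τ j)) =
      (∏ i, Fintype.card (σ i)) * ∏ j, 2 ^ Fintype.card (τ j) := by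
    simp [Fintype.card_prod, Fintype.card_pi, Fintype.card_set]
  rwa [hcard] at hw'len
end

section
/- (Expressibility of the paper's complement operator by complement-free regular expressions.) For every regular expression R over a finite alphabet Σ, there exists a regular expression R' over Σ (built using only ∅, ε, letters, concatenation, union, and Kleene star) such that L(R') = L(R^*) \ L(R), which is the paper's semantics of the complement expression over-bar R; in particular, taking R with L(R^*) = Σ^*, the class of languages matched by regular expressions over Σ is closed under complementation relative to Σ^*. -/
open Set
open scoped Computability
namespace KP
variable {A : Type}

/-- Left derivative of a language by a letter. -/
def Dl (L : Language A) (a : A) : Language A := {w | a :: w ∈ L}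

lemma mem_Dl {L : Language A} {a : A} {w : List A} : w ∈ Dl L a ↔ a :: w ∈ L := Iff.rfl

/-- Left derivative by a word. -/
def Dw (L : Language A) : List A → Language A
  | [] => L
  | a :: w => Dw (Dl L a) w

@[simp] lemma Dw_nil (L : Language A) : Dw L [] = L := rfl
@[simp] lemma Dw_cons (L : Language A) (a : A) (w : List A) :
    Dw L (a :: w) = Dw (Dl L a) w := rfl

lemma Dw_snoc (L : Language A) (w : List A) (a : A) :
    Dw L (w ++ [a]) = Dl (Dw L w) a := by
  induction w generalizing L with
  | nil => rfl
  | cons b w ih => simp [ih]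

lemma mem_Dw {L : Language A} {w v : List A} : v ∈ Dw L w ↔ w ++ v ∈ L := by
  induction w generalizing L with
  | nil => rfl
  | cons a w ih => exact ih (L := Dl L a)

@[simp] lemma Dl_zero (a : A) : Dl (0 : Language A) a = 0 := rfl

@[simp] lemma Dl_one (a : A) : Dl (1 : Language A) a = 0 := by
  ext w
  simp only [Dl, Language.mem_one, Set.mem_setOf_eq]
  constructor
  · intro h; cases h
  · intro h; exact h.elim

@[simp] lemma Dl_add (L M : Language A) (a : A) : Dl (L + M) a = Dl L a + Dl M a := rfl

@[simp] lemma Dw_zero (w : List A) : Dw (0 : Language A) w = 0 := by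
  induction w with
  | nil => rfl
  | cons a w ih => simp [ih]



/-- union of a set of languages -/
def sUn (S : Set (Language A)) : Language A := {w | ∃ l ∈ S, w ∈ l}

lemma mem_sUn {S : Set (Language A)} {w : List A} : w ∈ sUn S ↔ ∃ l ∈ S, w ∈ l := Iff.rfl

@[simp] lemma sUn_empty : sUn (∅ : Set (Language A)) = 0 := by
  ext w; constructor
  · rintro ⟨l, hl, _⟩; exact hl.elim
  · exact fun h => h.elim

@[simp] lemma Dl_sUn (S : Set (Language A)) (a : A) :
    Dl (sUn S) a = sUn ((fun l => Dl l a) '' S) := by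
  ext w; simp [mem_Dl, mem_sUn]

lemma sUn_union (S T : Set (Language A)) : sUn (S ∪ T) = sUn S + sUn T := by
  ext w
  rw [Language.mem_add, mem_sUn, mem_sUn, mem_sUn]
  simp [Set.mem_union, or_and_right, exists_or]

lemma sUn_singleton (l : Language A) : sUn {l} = l := by ext w; simp [mem_sUn]

open scoped Classical in
lemma Dl_mul (L M : Language A) (a : A) :
    Dl (L * M) a = Dl L a * M + (if [] ∈ L then Dl M a else 0) := by
  ext w
  simp only [mem_Dl, Language.mem_add, Language.mem_mul]
  constructor
  · rintro ⟨x, hx, y, hy, hxy⟩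
    cases x with
    | nil => right; simp at hxy; subst hxy; simp [hx, mem_Dl, hy]
    | cons b x =>
      left
      obtain ⟨rfl, rfl⟩ : b = a ∧ x ++ y = w := by
        constructor
        · exact (List.cons.injEq .. ▸ hxy).1
        · exact (List.cons.injEq .. ▸ hxy).2
      exact ⟨x, hx, y, hy, rfl⟩
  · rintro (⟨x, hx, y, hy, rfl⟩ | h)
    · exact ⟨a :: x, hx, y, hy, rfl⟩
    · split_ifs at h with hL
      · exact ⟨[], hL, a :: w, h, rfl⟩
      · exact absurd h (by exact fun h => h.elim)


open scoped Classical in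
lemma Dl_char (a b : A) : Dl ({[a]} : Language A) b = if b = a then 1 else 0 := by
  ext w
  simp only [mem_Dl]
  split_ifs with h
  · subst h; constructor
    · intro hw; change b :: w = [b] at hw; rw [List.cons.injEq] at hw
      simpa [Language.mem_one] using hw.2
    · intro hw; rw [Language.mem_one] at hw; subst hw; exact Set.mem_singleton _
  · constructor
    · intro hw; change b :: w = [a] at hw; rw [List.cons.injEq] at hw; exact absurd hw.1 h
    · intro hw; exact hw.elim

lemma Dl_kstar (L : Language A) (a : A) : Dl (L∗) a = Dl L a * L∗ := by
  ext w
  simp only [mem_Dl, Language.mem_mul]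
  constructor
  · intro h
    rw [Language.mem_kstar_iff_exists_nonempty] at h
    obtain ⟨S, hS, hmem⟩ := h
    cases S with
    | nil => simp at hS
    | cons c S' =>
      obtain ⟨hc, hcne⟩ := hmem c (by simp)
      cases c with
      | nil => exact absurd rfl hcne
      | cons b c' =>
        simp only [List.flatten_cons, List.cons_append, List.cons.injEq] at hS
        obtain ⟨rfl, rfl⟩ := hS
        refine ⟨c', hc, S'.flatten, ?_, rfl⟩
        exact Language.join_mem_kstar fun y hy => (hmem y (by simp [hy])).1
  · rintro ⟨x, hx, y, hy, rfl⟩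
    have : (a :: x) ++ y ∈ L * L∗ := Language.append_mem_mul hx hy
    exact (mul_kstar_le_kstar : L * L∗ ≤ L∗) this

lemma Dl_diff (L M : Language A) (a : A) : Dl ((L : Set (List A)) \ M : Set (List A)) a
    = ((Dl L a : Set (List A)) \ (Dl M a) : Set (List A)) := rfl

variable {A : Type}

/-- The set of word-derivatives (left quotients) of a language. -/
def ran (L : Language A) : Set (Language A) := Set.range (Dw L)

lemma self_mem_ran (L : Language A) : L ∈ ran L := ⟨[], rfl⟩

lemma Dw_mem_ran (L : Language A) (w : List A) : Dw L w ∈ ran L := ⟨w, rfl⟩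

lemma Dl_mem_ran {L M : Language A} (h : M ∈ ran L) (a : A) : Dl M a ∈ ran L := by
  obtain ⟨w, rfl⟩ := h
  exact ⟨w ++ [a], (Dw_snoc L w a)⟩

@[simp] lemma Dw_add (L M : Language A) (w : List A) :
    Dw (L + M) w = Dw L w + Dw M w := by
  induction w generalizing L M with
  | nil => rfl
  | cons a w ih => simp only [Dw_cons, Dl_add, ih]

lemma Dw_one_mem (w : List A) : Dw (1 : Language A) w ∈ ({0, 1} : Set (Language A)) := by
  cases w with
  | nil => right; rfl
  | cons a w => left; simp

lemma finRan_zero : (ran (0 : Language A)).Finite := by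
  apply Set.Finite.subset (Set.finite_singleton (0 : Language A))
  rintro _ ⟨w, rfl⟩; simp

lemma finRan_one : (ran (1 : Language A)).Finite := by
  apply Set.Finite.subset ((Set.finite_singleton (1 : Language A)).insert 0)
  rintro _ ⟨w, rfl⟩; exact Dw_one_mem w

lemma finRan_char (a : A) : (ran ({[a]} : Language A)).Finite := by
  apply Set.Finite.subset
    ((Set.finite_singleton ({[a]} : Language A)).insert 0 |>.insert 1)
  rintro _ ⟨w, rfl⟩
  cases w with
  | nil => right; right; rfl
  | cons b w =>
    classical
    simp only [Dw_cons, Dl_char]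
    split_ifs with h
    · rcases Dw_one_mem (A := A) w with h0 | h1
      · right; left; exact h0
      · left; exact h1
    · right; left; simp

lemma finRan_add {L M : Language A} (hL : (ran L).Finite) (hM : (ran M).Finite) :
    (ran (L + M)).Finite := by
  apply Set.Finite.subset (hL.image2 (· + ·) hM)
  rintro _ ⟨w, rfl⟩
  exact ⟨Dw L w, Dw_mem_ran L w, Dw M w, Dw_mem_ran M w, (Dw_add L M w).symm⟩

open scoped Classical in
lemma Dw_mul_shape (L M : Language A) (w : List A) :
    ∃ S : Set (Language A), S ⊆ ran M ∧ S.Finite ∧ Dw (L * M) w = Dw L w * M + sUn S := by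
  induction w using List.reverseRecOn with
  | nil => exact ⟨∅, by simp, Set.finite_empty, by simp⟩
  | append_singleton w a ih =>
    obtain ⟨S, hSsub, hSfin, hEq⟩ := ih
    refine ⟨(fun N => Dl N a) '' S ∪ (if [] ∈ Dw L w then {Dl M a} else ∅),
      ?_, ?_, ?_⟩
    · rintro N (⟨N', hN', rfl⟩ | hN)
      · exact Dl_mem_ran (hSsub hN') a
      · split_ifs at hN with h
        · rcases hN with rfl
          exact Dl_mem_ran (self_mem_ran M) a
        · exact hN.elim
    · apply Set.Finite.union (hSfin.image _)
      split_ifs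
      · exact Set.finite_singleton _
      · exact Set.finite_empty
    · rw [Dw_snoc, hEq, Dl_add, Dl_mul, Dw_snoc, Dl_sUn, sUn_union, add_assoc]
      congr 1
      rw [add_comm]
      congr 1
      split_ifs with h
      · exact (sUn_singleton _).symm
      · simp

lemma finRan_mul {L M : Language A} (hL : (ran L).Finite) (hM : (ran M).Finite) :
    (ran (L * M)).Finite := by
  classical
  apply Set.Finite.subset (Set.Finite.image2 (fun X S => X * M + sUn S) hL hM.finite_subsets)
  rintro _ ⟨w, rfl⟩
  obtain ⟨S, hSsub, _, hEq⟩ := Dw_mul_shape L M w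
  exact ⟨Dw L w, Dw_mem_ran L w, S, hSsub, hEq.symm⟩

open scoped Classical in
lemma Dw_kstar_shape (L : Language A) (w : List A) :
    Dw (L∗) w = L∗ ∨
      ∃ S : Set (Language A), S ⊆ ran L ∧ S.Finite ∧ Dw (L∗) w = sUn S * L∗ := by
  induction w using List.reverseRecOn with
  | nil => left; rfl
  | append_singleton w a ih =>
    right
    rcases ih with h | ⟨S, hSsub, hSfin, hEq⟩
    · refine ⟨{Dl L a}, ?_, Set.finite_singleton _, ?_⟩
      · rintro N rfl
        exact Dl_mem_ran (self_mem_ran L) a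
      · rw [Dw_snoc, h, Dl_kstar, sUn_singleton]
    · refine ⟨(fun N => Dl N a) '' S ∪ (if [] ∈ sUn S then {Dl L a} else ∅), ?_, ?_, ?_⟩
      · rintro N (⟨N', hN', rfl⟩ | hN)
        · exact Dl_mem_ran (hSsub hN') a
        · split_ifs at hN with h
          · rcases hN with rfl
            exact Dl_mem_ran (self_mem_ran L) a
          · exact hN.elim
      · apply Set.Finite.union (hSfin.image _)
        split_ifs
        · exact Set.finite_singleton _
        · exact Set.finite_empty
      · rw [Dw_snoc, hEq, Dl_mul, Dl_kstar, Dl_sUn, sUn_union, add_mul]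
        congr 1
        split_ifs with h
        · rw [sUn_singleton]
        · simp

lemma finRan_kstar {L : Language A} (hL : (ran L).Finite) : (ran (L∗)).Finite := by
  classical
  apply Set.Finite.subset
    (((hL.finite_subsets).image (fun S => sUn S * L∗)).insert (L∗))
  rintro _ ⟨w, rfl⟩
  rcases Dw_kstar_shape L w with h | ⟨S, hSsub, _, hEq⟩
  · left; exact h
  · right; exact ⟨S, hSsub, hEq.symm⟩

theorem finRan_regex (R : RegularExpression A) : (ran R.matches').Finite := by
  induction R with
  | zero => exact finRan_zero
  | epsilon => exact finRan_one
  | char a => exact finRan_char a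
  | plus P Q ihP ihQ => exact finRan_add ihP ihQ
  | comp P Q ihP ihQ => exact finRan_mul ihP ihQ
  | star P ih => exact finRan_kstar ih

end KP

namespace KP2
open KP
variable {A : Type}

/-- Difference of languages. -/
def LDiff (L M : Language A) : Language A := {w | w ∈ L ∧ w ∉ M}

lemma LDiff_eq (L M : Language A) : (LDiff L M : Set (List A)) = (L : Set (List A)) \ M := rfl

lemma Dl_LDiff (L M : Language A) (a : A) : Dl (LDiff L M) a = LDiff (Dl L a) (Dl M a) := rfl

lemma Dw_LDiff (L M : Language A) (w : List A) :
    Dw (LDiff L M) w = LDiff (Dw L w) (Dw M w) := by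
  induction w generalizing L M with
  | nil => rfl
  | cons a w ih => simp only [Dw_cons, Dl_LDiff, ih]

lemma finRan_LDiff {L M : Language A} (hL : (ran L).Finite) (hM : (ran M).Finite) :
    (ran (LDiff L M)).Finite := by
  apply Set.Finite.subset (hL.image2 LDiff hM)
  rintro _ ⟨w, rfl⟩
  exact ⟨Dw L w, Dw_mem_ran L w, Dw M w, Dw_mem_ran M w, (Dw_LDiff L M w).symm⟩

/-- Myhill–Nerode style quotient DFA. -/
lemma exists_dfa (L : Language A) (h : (ran L).Finite) :
    ∃ (σ : Type) (_ : Fintype σ) (M : DFA A σ), M.accepts = L := by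
  refine ⟨{N : Language A // N ∈ ran L}, h.fintype,
    ⟨fun q a => ⟨Dl q.1 a, Dl_mem_ran q.2 a⟩, ⟨L, self_mem_ran L⟩, {q | [] ∈ q.1}⟩, ?_⟩
  set M : DFA A {N : Language A // N ∈ ran L} :=
    ⟨fun q a => ⟨Dl q.1 a, Dl_mem_ran q.2 a⟩, ⟨L, self_mem_ran L⟩, {q | [] ∈ q.1}⟩ with hM
  have key : ∀ (w : List A) (q : {N : Language A // N ∈ ran L}),
      (M.evalFrom q w).1 = Dw q.1 w := by
    intro w
    induction w with
    | nil => intro q; rfl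
    | cons a w ih =>
      intro q
      show (M.evalFrom (M.step q a) w).1 = _
      rw [ih]
      rfl
  ext w
  rw [DFA.mem_accepts]
  show M.eval w ∈ {q : {N : Language A // N ∈ ran L} | [] ∈ q.1} ↔ w ∈ L
  rw [Set.mem_setOf_eq]
  show [] ∈ (M.evalFrom M.start w).1 ↔ w ∈ L
  rw [key]
  show [] ∈ Dw L w ↔ w ∈ L
  rw [mem_Dw, List.append_nil]

end KP2
namespace KB
variable {A : Type} [Fintype A] {σ : Type} [Fintype σ]

/-- Sum (union) of a list of regular expressions. -/
def sumR : List (RegularExpression A) → RegularExpression A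
  | [] => 0
  | r :: l => r + sumR l

lemma mem_sumR {l : List (RegularExpression A)} {w : List A} :
    w ∈ (sumR l).matches' ↔ ∃ r ∈ l, w ∈ r.matches' := by
  induction l with
  | nil =>
    simp only [sumR, RegularExpression.matches'_zero]
    constructor
    · intro h; exact h.elim
    · rintro ⟨r, hr, _⟩; exact absurd hr List.not_mem_nil
  | cons r l ih =>
    simp only [sumR, RegularExpression.matches'_add, Language.mem_add, ih, List.mem_cons]
    constructor
    · rintro (h | ⟨r', hr', hw⟩)
      · exact ⟨r, Or.inl rfl, h⟩
      · exact ⟨r', Or.inr hr', hw⟩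
    · rintro ⟨r', (rfl | hr'), hw⟩
      · exact Or.inl hw
      · exact Or.inr ⟨r', hr', hw⟩

variable (M : DFA A σ)

/-- `W M P s w t` : reading `w` from `s` ends in `t`, with all intermediate states in `P`. -/
def W (P : Set σ) : σ → List A → σ → Prop
  | s, [], t => s = t
  | s, a :: w, t => (w = [] ∧ M.step s a = t) ∨ (M.step s a ∈ P ∧ W P (M.step s a) w t)

lemma W_mono {P Q : Set σ} (hPQ : P ⊆ Q) :
    ∀ {w : List A} {s t : σ}, W M P s w t → W M Q s w t := by
  intro w
  induction w with
  | nil => intro s t h; exact h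
  | cons a w ih =>
    rintro s t (⟨rfl, h⟩ | ⟨hmem, h⟩)
    · exact Or.inl ⟨rfl, h⟩
    · exact Or.inr ⟨hPQ hmem, ih h⟩

lemma W_append {P : Set σ} {q t : σ} (hq : q ∈ P) :
    ∀ {u : List A} {s : σ} {v : List A}, W M P s u q → W M P q v t → W M P s (u ++ v) t := by
  intro u
  induction u with
  | nil => intro s v h1 h2; cases h1; exact h2
  | cons a u ih =>
    rintro s v (⟨rfl, h⟩ | ⟨hmem, h⟩) h2
    · cases v with
      | nil => cases h2; exact Or.inl ⟨rfl, h⟩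
      | cons b v => exact Or.inr ⟨h ▸ hq, h ▸ h2⟩
    · exact Or.inr ⟨hmem, ih h h2⟩

lemma W_split {P : Set σ} {q t : σ} :
    ∀ {w : List A} {s : σ}, W M (insert q P) s w t →
      W M P s w t ∨ ∃ a u v, w = a :: (u ++ v) ∧ W M P s (a :: u) q ∧ W M (insert q P) q v t := by
  intro w
  induction w with
  | nil => intro s h; exact Or.inl h
  | cons a w ih =>
    rintro s (⟨rfl, h⟩ | ⟨hmem, h⟩)
    · exact Or.inl (Or.inl ⟨rfl, h⟩)
    · rcases hmem with rfl | hmem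
      · exact Or.inr ⟨a, [], w, rfl, Or.inl ⟨rfl, rfl⟩, h⟩
      · rcases ih h with h' | ⟨b, u, v, rfl, h1, h2⟩
        · exact Or.inl (Or.inr ⟨hmem, h'⟩)
        · exact Or.inr ⟨a, b :: u, v, rfl, Or.inr ⟨hmem, h1⟩, h2⟩


/-- The language of words going from `s` to `t` with intermediates in `P`. -/
def WL (P : Set σ) (s t : σ) : Language A := {w | W M P s w t}

lemma mem_WL {P : Set σ} {s t : σ} {w : List A} : w ∈ WL M P s t ↔ W M P s w t := Iff.rfl

lemma kstar_W {P : Set σ} {q : σ} {y : List A}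
    (hy : y ∈ (WL M P q q)∗) : W M (insert q P) q y q := by
  rw [Language.mem_kstar] at hy
  obtain ⟨L, rfl, hL⟩ := hy
  induction L with
  | nil => rfl
  | cons c L ih =>
    rw [List.flatten_cons]
    exact W_append M (Set.mem_insert q P)
      (W_mono M (Set.subset_insert q P) (hL c (by simp)))
      (ih fun y hy => hL y (by simp [hy]))

lemma W_star_aux {P : Set σ} {q t : σ} :
    ∀ (n : ℕ) (w : List A), w.length ≤ n → W M (insert q P) q w t →
      w ∈ (WL M P q q)∗ * WL M P q t := by
  intro n
  induction n with
  | zero =>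
    intro w hw h
    rw [Nat.le_zero, List.length_eq_zero_iff] at hw
    subst hw
    exact Language.append_mem_mul (Language.nil_mem_kstar _) (mem_WL M |>.2 h)
  | succ n ih =>
    intro w hw h
    rcases W_split M h with h' | ⟨a, u, v, rfl, h1, h2⟩
    · exact Language.append_mem_mul (Language.nil_mem_kstar _) (mem_WL M |>.2 h')
    · have hv : v.length ≤ n := by
        simp only [List.length_cons, List.length_append] at hw
        omega
      obtain ⟨x, hx, y, hy, rfl⟩ := Language.mem_mul.1 (ih v hv h2)
      have hmem : (a :: u) ++ x ∈ (WL M P q q)∗ := by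
        have h3 : (a :: u) ++ x ∈ WL M P q q * (WL M P q q)∗ :=
          Language.append_mem_mul (mem_WL M |>.2 h1) hx
        exact (mul_kstar_le_kstar : WL M P q q * (WL M P q q)∗ ≤ (WL M P q q)∗) h3
      have := Language.append_mem_mul hmem hy
      simpa [List.append_assoc] using this

lemma W_insert_eq (P : Set σ) (q s t : σ) :
    WL M (insert q P) s t = WL M P s t + WL M P s q * (WL M P q q)∗ * WL M P q t := by
  ext w
  rw [Language.mem_add]
  constructor
  · intro h
    rw [mem_WL] at h
    rcases W_split M h with h' | ⟨a, u, v, rfl, h1, h2⟩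
    · exact Or.inl h'
    · right
      obtain ⟨x, hx, y, hy, rfl⟩ := Language.mem_mul.1 (W_star_aux M v.length v le_rfl h2)
      have h4 : (a :: u) ++ x ∈ WL M P s q * (WL M P q q)∗ :=
        Language.append_mem_mul (mem_WL M |>.2 h1) hx
      have := Language.append_mem_mul h4 hy
      simpa [List.append_assoc] using this
  · rintro (h | h)
    · exact W_mono M (Set.subset_insert q P) h
    · obtain ⟨xy, hxy, z, hz, rfl⟩ := Language.mem_mul.1 h
      obtain ⟨x, hx, y, hy, rfl⟩ := Language.mem_mul.1 hxy
      have hq : q ∈ insert q P := Set.mem_insert q P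
      rw [mem_WL]
      refine W_append M hq ?_ (W_mono M (Set.subset_insert q P) hz)
      exact W_append M hq (W_mono M (Set.subset_insert q P) hx) (kstar_W M hy)


open scoped Classical in
/-- Regex for paths with intermediate states from a list. -/
noncomputable def reg : List σ → σ → σ → RegularExpression A
  | [], s, t =>
      (if s = t then 1 else 0) +
        sumR (((Finset.univ : Finset A).filter fun a => M.step s a = t).toList.map
          RegularExpression.char)
  | q :: l, s, t => reg l s t + reg l s q * (reg l q q).star * reg l q t

theorem reg_matches (l : List σ) (s t : σ) :
    (reg M l s t).matches' = WL M {p | p ∈ l} s t := by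
  classical
  induction l generalizing s t with
  | nil =>
    ext w
    have hP : {p : σ | p ∈ ([] : List σ)} = (∅ : Set σ) := by ext p; simp
    rw [mem_WL, hP]
    show w ∈ (reg M [] s t).matches' ↔ _
    rw [show reg M [] s t = (if s = t then 1 else 0) +
        sumR (((Finset.univ : Finset A).filter fun a => M.step s a = t).toList.map
          RegularExpression.char) from rfl]
    rw [RegularExpression.matches'_add, Language.mem_add, mem_sumR]
    simp only [List.mem_map, Finset.mem_toList, Finset.mem_filter, Finset.mem_univ, true_and]
    constructor
    · rintro (h1 | ⟨r, ⟨a, ha, rfl⟩, hw⟩)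
      · split_ifs at h1 with h
        · rw [RegularExpression.matches'_epsilon, Language.mem_one] at h1
          subst h1
          exact (h : W M ∅ s [] t)
        · rw [RegularExpression.matches'_zero] at h1
          exact h1.elim
      · rw [RegularExpression.matches'_char] at hw; change w = [a] at hw
        subst hw
        exact Or.inl ⟨rfl, ha⟩
    · intro h
      cases w with
      | nil =>
        left
        have hst : s = t := h
        rw [if_pos hst, RegularExpression.matches'_epsilon, Language.mem_one]
      | cons a w' =>
        rcases h with ⟨rfl, hstep⟩ | ⟨hmem, _⟩
        · exact Or.inr ⟨RegularExpression.char a, ⟨a, hstep, rfl⟩, rfl⟩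
        · exact hmem.elim
  | cons q l ih =>
    have hset : {p : σ | p ∈ q :: l} = insert q {p : σ | p ∈ l} := by
      ext p; simp [List.mem_cons]
    rw [show reg M (q :: l) s t =
        reg M l s t + reg M l s q * (reg M l q q).star * reg M l q t from rfl]
    rw [RegularExpression.matches'_add, RegularExpression.matches'_mul,
      RegularExpression.matches'_mul, RegularExpression.matches'_star, ih, ih, ih, ih,
      hset, W_insert_eq]

lemma W_univ : ∀ (w : List A) (s t : σ), W M Set.univ s w t ↔ M.evalFrom s w = t := by
  intro w
  induction w with
  | nil => intro s t; exact Iff.rfl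
  | cons a w ih =>
    intro s t
    show _ ↔ M.evalFrom (M.step s a) w = t
    constructor
    · rintro (⟨rfl, h⟩ | ⟨-, h⟩)
      · exact h
      · exact (ih _ _).1 h
    · intro h
      exact Or.inr ⟨Set.mem_univ _, (ih _ _).2 h⟩

theorem dfa_regex : ∃ R : RegularExpression A, R.matches' = M.accepts := by
  classical
  refine ⟨sumR (((Finset.univ : Finset σ).filter fun t => t ∈ M.accept).toList.map
    fun t => reg M (Finset.univ : Finset σ).toList M.start t), ?_⟩
  have huniv : {p : σ | p ∈ (Finset.univ : Finset σ).toList} = Set.univ := by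
    ext p; simp
  ext w
  rw [mem_sumR, DFA.mem_accepts]
  simp only [List.mem_map, Finset.mem_toList, Finset.mem_filter, Finset.mem_univ, true_and]
  constructor
  · rintro ⟨r, ⟨t, ht, rfl⟩, hw⟩
    rw [reg_matches, huniv, mem_WL, W_univ] at hw
    rw [show M.eval w = M.evalFrom M.start w from rfl, hw]
    exact ht
  · intro hw
    refine ⟨_, ⟨M.eval w, hw, rfl⟩, ?_⟩
    rw [reg_matches, huniv, mem_WL, W_univ]
    rfl

end KB

theorem stmt_15 {A : Type} [Fintype A] :
    (∀ R : RegularExpression A,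
      ∃ R' : RegularExpression A,
        (R'.matches' : Set (List A)) =
          (R.star.matches' : Set (List A)) \ R.matches') ∧
    (∀ R : RegularExpression A,
      (R.star.matches' : Set (List A)) = Set.univ →
      ∃ R' : RegularExpression A,
        (R'.matches' : Set (List A)) = Set.univ \ R.matches') := by
  have main : ∀ R : RegularExpression A,
      ∃ R' : RegularExpression A,
        (R'.matches' : Set (List A)) =
          (R.star.matches' : Set (List A)) \ R.matches' := by
    intro R
    have hfin : (KP.ran (KP2.LDiff R.star.matches' R.matches')).Finite :=
      KP2.finRan_LDiff (KP.finRan_regex R.star) (KP.finRan_regex R)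
    obtain ⟨σ, hσ, M, hM⟩ := KP2.exists_dfa _ hfin
    haveI := hσ
    obtain ⟨R', hR'⟩ := KB.dfa_regex M
    refine ⟨R', ?_⟩
    rw [hR', hM]
    rfl
  refine ⟨main, fun R h => ?_⟩
  obtain ⟨R', hR'⟩ := main R
  exact ⟨R', by rw [hR', h]; rfl⟩
end
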